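/- arXiv:1807.01178 — 3 statements merged into one kernel-verified Lean document; each statement's English description precedes it below -/
import Mathlib

section
/- Let V be a finite-dimensional real inner product space and C ⊆ V a closed convex cone containing no line (i.e., C ∩ (−C) = {0}, C pointed). Then the polar cone C* = {w : ∀ z ∈ C, ⟨z, w⟩ ≤ 0} has nonempty interior. -/
open RealInnerProductSpace

theorem polar_cone_nonempty_interior_of_pointed
    {V : Type*} [NormedAddCommGroup V] [InnerProductSpace ℝ V] [FiniteDimensional ℝ V]
    (C : Set V) (hCcl : IsClosed C) (hCconv : Convex ℝ C) (h0 : (0 : V) ∈ C)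
    (hcone : ∀ (c : ℝ), 0 ≤ c → ∀ z ∈ C, c • z ∈ C)
    (hpointed : C ∩ (-C) = {0}) :
    (interior {w : V | ∀ z ∈ C, ⟪z, w⟫ ≤ 0}).Nonempty := by
  set D : Set V := {w : V | ∀ z ∈ C, ⟪z, w⟫ ≤ 0} with hD
  have hDconv : Convex ℝ D := by
    intro x hx y hy a b ha hb hab
    intro z hz
    have := hx z hz
    have := hy z hz
    rw [inner_add_right, real_inner_smul_right, real_inner_smul_right]
    nlinarith
  have h0D : (0 : V) ∈ D := by intro z hz; simp
  -- build the convex cone structure on C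
  set K : ConvexCone ℝ V :=
    { carrier := C
      smul_mem' := fun c hc x hx => hcone c hc.le x hx
      add_mem' := by
        intro x hx y hy
        have hmid : (1/2 : ℝ) • x + (1/2 : ℝ) • y ∈ C :=
          hCconv hx hy (by norm_num) (by norm_num) (by norm_num)
        have := hcone 2 (by norm_num) _ hmid
        have h2 : (2:ℝ) • ((1/2 : ℝ) • x + (1/2 : ℝ) • y) = x + y := by
          rw [smul_add, smul_smul, smul_smul]; norm_num
        rwa [h2] at this } with hK
  have hKC : (K : Set V) = C := rfl
  -- key: the span of D is everything
  have hspan : Submodule.span ℝ D = ⊤ := by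
    by_contra hne
    have hbot : (Submodule.span ℝ D)ᗮ ≠ ⊥ := by
      intro h
      exact hne ((Submodule.orthogonal_eq_bot_iff).mp h)
    obtain ⟨u, huO, hu0⟩ := Submodule.exists_mem_ne_zero_of_ne_bot hbot
    have horth : ∀ w ∈ D, ⟪w, u⟫ = 0 := fun w hw =>
      huO _ (Submodule.subset_span hw)
    -- the inner dual cone of C is -D
    have hdual : ∀ y, y ∈ ProperCone.innerDual C ↔ -y ∈ D := by
      intro y
      rw [ProperCone.mem_innerDual]
      constructor
      · intro h z hz; rw [inner_neg_right]; linarith [h hz]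
      · intro h x hx; have := h x hx; rw [inner_neg_right] at this; linarith
    -- bipolar theorem
    have hbi : (ProperCone.innerDual (ProperCone.innerDual (K : Set V) : Set V) : Set V) = K := by
      have := ProperCone.innerDual_innerDual (E := V)
        { carrier := C, add_mem' := fun hx hy => K.add_mem hx hy, zero_mem' := h0,
          smul_mem' := fun c x hx => hcone c c.2 x hx, isClosed' := hCcl }
      exact congrArg SetLike.coe this
    have huC : u ∈ C := by
      rw [← hKC, ← hbi, SetLike.mem_coe, ProperCone.mem_innerDual]
      intro y hy
      rw [hKC, SetLike.mem_coe, hdual] at hy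
      have := horth _ hy
      rw [inner_neg_left] at this
      linarith
    have hnuC : -u ∈ C := by
      rw [← hKC, ← hbi, SetLike.mem_coe, ProperCone.mem_innerDual]
      intro y hy
      rw [hKC, SetLike.mem_coe, hdual] at hy
      have := horth _ hy
      rw [inner_neg_left] at this
      rw [inner_neg_right]; linarith
    have : u ∈ C ∩ (-C) := ⟨huC, by simpa using hnuC⟩
    rw [hpointed] at this
    exact hu0 this
  -- span = ⊤ implies affineSpan = ⊤, hence nonempty interior
  have haff : affineSpan ℝ D = ⊤ := by
    rw [AffineSubspace.affineSpan_eq_top_iff_vectorSpan_eq_top_of_nonempty ℝ V V ⟨0, h0D⟩]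
    rw [← top_le_iff, ← hspan, vectorSpan_def]
    apply Submodule.span_mono
    intro x hx
    exact ⟨x, hx, 0, h0D, by simp⟩
  exact hDconv.interior_nonempty_iff_affineSpan_eq_top.mpr haff
end

section
/- Let S ⊆ V be a nonempty closed convex subset of a finite-dimensional real inner product space, with asymptotic cone S_∞ and polar cone S_∞* = {w : ∀ z ∈ S_∞, ⟨z, w⟩ ≤ 0}. Then the support function h_S(w) = sup_{z ∈ S} ⟨z, w⟩ is finite for every w in the interior of S_∞*, and h_S(w) = +∞ for every w ∉ S_∞*. -/
open RealInnerProductSpace Filter Topology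

theorem support_function_finite_on_interior_polar
    {V : Type*} [NormedAddCommGroup V] [InnerProductSpace ℝ V] [FiniteDimensional ℝ V]
    (S : Set V) (hSne : S.Nonempty) (hScl : IsClosed S) (hSconv : Convex ℝ S) :
    (∀ w ∈ interior {w : V | ∀ z ∈ {z : V | ∀ s ∈ S, z + s ∈ S}, ⟪z, w⟫ ≤ 0},
        ⊥ < sSup ((fun z => ((⟪z, w⟫ : ℝ) : EReal)) '' S) ∧
          sSup ((fun z => ((⟪z, w⟫ : ℝ) : EReal)) '' S) < ⊤) ∧
      ∀ w ∉ {w : V | ∀ z ∈ {z : V | ∀ s ∈ S, z + s ∈ S}, ⟪z, w⟫ ≤ 0},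
        sSup ((fun z => ((⟪z, w⟫ : ℝ) : EReal)) '' S) = ⊤ := by
  obtain ⟨s₀, hs₀⟩ := hSne
  constructor
  · intro w hw
    refine ⟨lt_of_lt_of_le (EReal.bot_lt_coe _) (le_sSup ⟨s₀, hs₀, rfl⟩), ?_⟩
    by_contra htop
    rw [not_lt, top_le_iff] at htop
    -- extract a sequence with inner products going to infinity
    have hseq : ∀ n : ℕ, ∃ s ∈ S, ((n : ℝ) + 1) < ⟪s, w⟫ := by
      intro n
      obtain ⟨y, ⟨s, hs, rfl⟩, hy⟩ := sSup_eq_top.mp htop (((n : ℝ) + 1 : ℝ) : EReal)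
        (EReal.coe_lt_top _)
      refine ⟨s, hs, ?_⟩
      have hy' : ((((n : ℝ) + 1 : ℝ)) : EReal) < ((⟪s, w⟫ : ℝ) : EReal) := hy
      exact_mod_cast hy'
    choose t htS htw using hseq
    have hwpos : 0 < ‖w‖ := by
      rcases eq_or_lt_of_le (norm_nonneg w) with h | h
      · exfalso
        have := htw 0
        have hw0 : w = 0 := norm_eq_zero.mp h.symm
        norm_num [hw0, inner_zero_right] at this
      · exact h
    have hnormlb : ∀ n : ℕ, ((n : ℝ) + 1) / ‖w‖ < ‖t n‖ := by
      intro n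
      have h2 : ⟪t n, w⟫ ≤ ‖t n‖ * ‖w‖ := real_inner_le_norm _ _
      rw [div_lt_iff₀ hwpos]
      linarith [htw n]
    have hnormpos : ∀ n : ℕ, 0 < ‖t n‖ := fun n =>
      lt_trans (by positivity) (hnormlb n)
    have hnormtop : Tendsto (fun n => ‖t n‖) atTop atTop := by
      apply tendsto_atTop_mono (fun n => (hnormlb n).le)
      apply Tendsto.atTop_div_const hwpos
      exact tendsto_atTop_add_const_right _ _ tendsto_natCast_atTop_atTop
    -- unit vectors
    set u : ℕ → V := fun n => ‖t n‖⁻¹ • t n with hu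
    have humem : ∀ n, u n ∈ Metric.sphere (0 : V) 1 := by
      intro n
      simp [hu, norm_smul, abs_of_pos (inv_pos.mpr (hnormpos n)),
        inv_mul_cancel₀ (hnormpos n).ne']
    obtain ⟨a, ha, φ, hφ, hφt⟩ := (isCompact_sphere (0 : V) 1).tendsto_subseq humem
    have hφtop : Tendsto (fun n => ‖t (φ n)‖) atTop atTop :=
      hnormtop.comp hφ.tendsto_atTop
    have hcto : Tendsto (fun n => ‖t (φ n)‖⁻¹) atTop (𝓝 0) :=
      tendsto_inv_atTop_zero.comp hφtop
    -- a is in the asymptotic cone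
    have haK : ∀ s ∈ S, a + s ∈ S := by
      intro s hs
      have hev : ∀ᶠ n in atTop, (1 : ℝ) ≤ ‖t (φ n)‖ := hφtop.eventually_ge_atTop 1
      have hmem : ∀ᶠ n in atTop,
          (1 - ‖t (φ n)‖⁻¹) • s + u (φ n) ∈ S := by
        filter_upwards [hev] with n hn
        have h1 : (0 : ℝ) < ‖t (φ n)‖ := hnormpos _
        have h2 : ‖t (φ n)‖⁻¹ ≤ 1 := inv_le_one_of_one_le₀ hn
        have := hSconv hs (htS (φ n)) (by linarith [inv_pos.mpr h1] : (0:ℝ) ≤ 1 - ‖t (φ n)‖⁻¹)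
          (inv_pos.mpr h1).le (by ring)
        simpa [hu] using this
      have hlim : Tendsto (fun n => (1 - ‖t (φ n)‖⁻¹) • s + u (φ n)) atTop (𝓝 (s + a)) := by
        have h1 : Tendsto (fun n => ((1 : ℝ) - ‖t (φ n)‖⁻¹)) atTop (𝓝 1) := by
          simpa using (tendsto_const_nhds (x := (1:ℝ))).sub hcto
        have := (h1.smul tendsto_const_nhds (f := fun n => (1 : ℝ) - ‖t (φ n)‖⁻¹)
          (g := fun _ : ℕ => s)).add hφt
        simpa using this
      have := hScl.mem_of_tendsto hlim hmem
      rwa [add_comm] at this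
    -- ⟪a, w⟫ ≥ 0
    have haw : 0 ≤ ⟪a, w⟫ := by
      have hlim : Tendsto (fun n => ⟪u (φ n), w⟫) atTop (𝓝 ⟪a, w⟫) :=
        hφt.inner tendsto_const_nhds
      refine ge_of_tendsto hlim (Eventually.of_forall fun n => ?_)
      have h1 : 0 < ⟪t (φ n), w⟫ := lt_trans (by positivity) (htw (φ n))
      have : ⟪u (φ n), w⟫ = ‖t (φ n)‖⁻¹ * ⟪t (φ n), w⟫ := real_inner_smul_left _ _ _
      rw [this]
      positivity
    -- contradiction with interior
    obtain ⟨ε, hε, hball⟩ := Metric.mem_nhds_iff.mp (mem_interior_iff_mem_nhds.mp hw)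
    have hanorm : ‖a‖ = 1 := by simpa using ha
    have hw' : w + (ε / 2) • a ∈ Metric.ball w ε := by
      rw [Metric.mem_ball, dist_eq_norm]
      simp only [add_sub_cancel_left, norm_smul, hanorm, mul_one]
      rw [Real.norm_eq_abs, abs_of_pos (by linarith)]
      linarith
    have := hball hw' a haK
    rw [inner_add_right, real_inner_smul_right, real_inner_self_eq_norm_sq, hanorm] at this
    nlinarith
  · intro w hw
    simp only [Set.mem_setOf_eq, not_forall] at hw
    obtain ⟨z, hzK, hzw⟩ := hw
    rw [not_le] at hzw
    have hmem : ∀ n : ℕ, (n : ℕ) • z + s₀ ∈ S := by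
      intro n
      induction n with
      | zero => simpa using hs₀
      | succ k ih =>
        have := hzK _ ih
        rw [← add_assoc] at this
        simpa [add_smul, one_smul, add_comm] using this
    rw [sSup_eq_top]
    intro b hb
    obtain ⟨r, hrb, -⟩ := EReal.lt_iff_exists_real_btwn.mp hb
    obtain ⟨n, hn⟩ := exists_nat_gt ((r - ⟪s₀, w⟫) / ⟪z, w⟫)
    refine ⟨((⟪(n : ℕ) • z + s₀, w⟫ : ℝ) : EReal), ⟨_, hmem n, rfl⟩, lt_trans hrb ?_⟩
    rw [EReal.coe_lt_coe_iff, inner_add_left, ← Nat.cast_smul_eq_nsmul ℝ,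
      real_inner_smul_left]
    rw [div_lt_iff₀ hzw] at hn
    linarith
end

section
/- Let S ⊆ ℂ be a nonempty closed convex set containing no line, S_∞ its asymptotic cone, and S_∞* = {w : ∀ z ∈ S_∞, Re(z·conj(w)) ≤ 0} (identifying the pairing with the real inner product Re(z·conj(w))). Let w₀ be in the interior of S_∞* and ε > 0. Then there exist δ > 0 and R₀ > 0 such that for all z ∈ S_ε := S + closedBall(0,ε) with |z| ≥ R₀, one has Re(z·conj(w₀)) ≤ −δ·|z|. -/
open Pointwise

set_option maxHeartbeats 1000000 in
theorem meril_arc_decay_estimate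
    (S : Set ℂ) (hSne : S.Nonempty) (hScl : IsClosed S) (hSconv : Convex ℝ S)
    (hnoline : ∀ z d : ℂ, d ≠ 0 → ¬ (∀ t : ℝ, z + t • d ∈ S))
    (w₀ : ℂ)
    (hw₀ : w₀ ∈ interior
      {w : ℂ | ∀ z ∈ {z : ℂ | ∀ s ∈ S, z + s ∈ S}, (z * (starRingEnd ℂ) w).re ≤ 0})
    (ε : ℝ) (hε : 0 < ε) :
    ∃ δ > 0, ∃ R₀ > 0, ∀ z ∈ S + Metric.closedBall (0 : ℂ) ε,
      R₀ ≤ ‖z‖ → (z * (starRingEnd ℂ) w₀).re ≤ -δ * ‖z‖ := by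
  obtain ⟨r, hr, hball⟩ := Metric.isOpen_iff.mp isOpen_interior w₀ hw₀
  -- Step 1: every recession direction pairs ≤ -(r/2)‖u‖ with w₀
  have hcone : ∀ u : ℂ, (∀ s ∈ S, u + s ∈ S) →
      (u * (starRingEnd ℂ) w₀).re ≤ -(r/2) * ‖u‖ := by
    intro u hu
    rcases eq_or_ne u 0 with h0 | h0
    · simp [h0]
    · have hun : (0:ℝ) < ‖u‖ := norm_pos_iff.mpr h0
      set c : ℝ := (r/2) * ‖u‖⁻¹ with hc
      have hcpos : 0 < c := by positivity
      have hwball : w₀ + c • u ∈ Metric.ball w₀ r := by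
        rw [Metric.mem_ball, dist_eq_norm]
        have : w₀ + c • u - w₀ = c • u := by ring_nf
        rw [this, norm_smul, Real.norm_eq_abs, abs_of_pos hcpos, hc]
        rw [mul_assoc, inv_mul_cancel₀ hun.ne', mul_one]
        linarith
      have hle : (u * (starRingEnd ℂ) (w₀ + c • u)).re ≤ 0 :=
        interior_subset (hball hwball) u hu
      have hexp : (u * (starRingEnd ℂ) (w₀ + c • u)).re
          = (u * (starRingEnd ℂ) w₀).re + c * ‖u‖^2 := by
        have : (starRingEnd ℂ) (c • u) = (c:ℂ) * (starRingEnd ℂ) u := by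
          simp [Complex.real_smul, map_mul, Complex.conj_ofReal]
        rw [map_add, mul_add, Complex.add_re, this, show u * ((c:ℂ) * (starRingEnd ℂ) u)
            = (c:ℂ) * (u * (starRingEnd ℂ) u) by ring, Complex.mul_conj,
          Complex.re_ofReal_mul, Complex.ofReal_re, Complex.normSq_eq_norm_sq]
      rw [hexp] at hle
      have huu : ‖u‖⁻¹ * ‖u‖ = 1 := inv_mul_cancel₀ hun.ne'
      have : c * ‖u‖^2 = (r/2) * ‖u‖ := by
        calc c * ‖u‖^2 = (r/2) * (‖u‖⁻¹ * ‖u‖) * ‖u‖ := by rw [hc]; ring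
          _ = (r/2) * ‖u‖ := by rw [huu]; ring
      nlinarith
  -- Step 2: contradiction via sequences
  by_contra hcon
  push_neg at hcon
  have hexists : ∀ n : ℕ, ∃ z ∈ S + Metric.closedBall (0 : ℂ) ε,
      ((n:ℝ)+1+ε) ≤ ‖z‖ ∧ -(1/((n:ℝ)+1)) * ‖z‖ < (z * (starRingEnd ℂ) w₀).re := by
    intro n
    have h1 : (0:ℝ) < 1/((n:ℝ)+1) := by positivity
    have h2 : (0:ℝ) < (n:ℝ)+1+ε := by positivity
    obtain ⟨z, hz, hR, hlt⟩ := hcon (1/((n:ℝ)+1)) h1 ((n:ℝ)+1+ε) h2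
    exact ⟨z, hz, hR, hlt⟩
  choose z hzmem hzR hzlb using hexists
  -- decompose z n = s n + b n
  have hdecomp : ∀ n, ∃ s ∈ S, ∃ b ∈ Metric.closedBall (0 : ℂ) ε, s + b = z n := by
    intro n
    exact Set.mem_add.mp (hzmem n)
  choose s hs b hb hsb using hdecomp
  have hbε : ∀ n, ‖b n‖ ≤ ε := by
    intro n
    have := hb n
    rwa [Metric.mem_closedBall, dist_zero_right] at this
  have hsM : ∀ n : ℕ, (n:ℝ) + 1 ≤ ‖s n‖ := by
    intro n
    have h1 : ‖z n‖ ≤ ‖s n‖ + ‖b n‖ := by rw [← hsb n]; exact norm_add_le _ _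
    have := hzR n
    have := hbε n
    linarith
  have hspos : ∀ n : ℕ, (0:ℝ) < ‖s n‖ := by
    intro n
    have h1 : (0:ℝ) < (n:ℝ) + 1 := by positivity
    linarith [hsM n]
  -- unit vectors
  set v : ℕ → ℂ := fun n => (‖s n‖⁻¹ : ℝ) • s n with hv
  have hvsphere : ∀ n, v n ∈ Metric.sphere (0:ℂ) 1 := by
    intro n
    rw [mem_sphere_zero_iff_norm, hv, norm_smul, Real.norm_eq_abs,
      abs_of_pos (inv_pos.mpr (hspos n)), inv_mul_cancel₀ (hspos n).ne']
  obtain ⟨u, hu_sphere, φ, hφ, hconv⟩ :=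
    (isCompact_sphere (0:ℂ) 1).tendsto_subseq hvsphere
  have hunorm : ‖u‖ = 1 := mem_sphere_zero_iff_norm.mp hu_sphere
  -- u is a recession direction
  have hurec : ∀ t ∈ S, u + t ∈ S := by
    intro t ht
    have hnormtop : Filter.Tendsto (fun n => ‖s (φ n)‖) Filter.atTop Filter.atTop := by
      apply Filter.tendsto_atTop_mono (fun n => ?_)
        (Filter.tendsto_atTop_add_const_right _ 1 tendsto_natCast_atTop_atTop)
      calc (n:ℝ) + 1 ≤ (φ n : ℝ) + 1 := by
              have h : n ≤ φ n := hφ.le_apply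
              have h2 : (n:ℝ) ≤ (φ n : ℝ) := by exact_mod_cast h
              linarith
        _ ≤ ‖s (φ n)‖ := hsM (φ n)
    have hinv0 : Filter.Tendsto (fun n => ‖s (φ n)‖⁻¹) Filter.atTop (nhds 0) :=
      hnormtop.inv_tendsto_atTop
    -- points in S converging to t + u
    have hmem : ∀ n, (1 - ‖s (φ n)‖⁻¹) • t + ‖s (φ n)‖⁻¹ • s (φ n) ∈ S := by
      intro n
      have h1 : (0:ℝ) ≤ ‖s (φ n)‖⁻¹ := by positivity
      have h2 : ‖s (φ n)‖⁻¹ ≤ 1 := by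
        apply inv_le_one_of_one_le₀
        have h3 : (0:ℝ) ≤ (φ n : ℝ) := Nat.cast_nonneg _
        linarith [hsM (φ n)]
      exact hSconv ht (hs (φ n)) (by linarith) h1 (by ring)
    have htend : Filter.Tendsto
        (fun n => (1 - ‖s (φ n)‖⁻¹) • t + ‖s (φ n)‖⁻¹ • s (φ n))
        Filter.atTop (nhds (t + u)) := by
      have h1 : Filter.Tendsto (fun n => (1 - ‖s (φ n)‖⁻¹) • t) Filter.atTop (nhds t) := by
        have : Filter.Tendsto (fun n => (1 - ‖s (φ n)‖⁻¹)) Filter.atTop (nhds 1) := by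
          have := (tendsto_const_nhds (x := (1:ℝ)) (f := Filter.atTop (α := ℕ))).sub hinv0
          simpa using this
        have := this.smul (tendsto_const_nhds (x := t) (f := Filter.atTop (α := ℕ)))
        simpa using this
      exact h1.add hconv
    have : t + u ∈ S := hScl.mem_of_tendsto htend (Filter.Eventually.of_forall hmem)
    rwa [add_comm] at this
  have hukey : (u * (starRingEnd ℂ) w₀).re ≤ -(r/2) := by
    have := hcone u hurec
    rwa [hunorm, mul_one] at this
  -- On the other hand the pairing with u is ≥ 0 by the limit argument
  have hpair_cont : Filter.Tendsto (fun n => ((v (φ n)) * (starRingEnd ℂ) w₀).re)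
      Filter.atTop (nhds ((u * (starRingEnd ℂ) w₀).re)) := by
    have hc : Continuous fun x : ℂ => (x * (starRingEnd ℂ) w₀).re :=
      Complex.continuous_re.comp (continuous_mul_right _)
    exact (hc.tendsto u).comp hconv
  set C : ℝ := 1 + ε + ε * ‖w₀‖ with hC
  have hCpos : 0 < C := by positivity
  have hlower : ∀ n : ℕ, -(C / ((n:ℝ)+1)) ≤ ((v (φ n)) * (starRingEnd ℂ) w₀).re := by
    intro n
    set N := φ n with hN
    have hNn : (n:ℝ) ≤ (N:ℝ) := by exact_mod_cast hφ.le_apply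
    have hM : (N:ℝ) + 1 ≤ ‖s N‖ := hsM N
    have hMpos : (0:ℝ) < ‖s N‖ := hspos N
    have ha : (0:ℝ) < (n:ℝ) + 1 := by positivity
    have hA : (0:ℝ) < (N:ℝ) + 1 := by positivity
    -- pairing bound for b
    have hbpair : ((b N) * (starRingEnd ℂ) w₀).re ≤ ε * ‖w₀‖ := by
      calc ((b N) * (starRingEnd ℂ) w₀).re ≤ ‖(b N) * (starRingEnd ℂ) w₀‖ :=
            Complex.re_le_norm _
        _ = ‖b N‖ * ‖w₀‖ := by rw [norm_mul, RCLike.norm_conj]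
        _ ≤ ε * ‖w₀‖ := by
            apply mul_le_mul_of_nonneg_right (hbε N) (norm_nonneg _)
    have hzsplit : ((z N) * (starRingEnd ℂ) w₀).re
        = ((s N) * (starRingEnd ℂ) w₀).re + ((b N) * (starRingEnd ℂ) w₀).re := by
      rw [← hsb N, add_mul, Complex.add_re]
    have hzn : ‖z N‖ ≤ ‖s N‖ + ε := by
      rw [← hsb N]
      calc ‖s N + b N‖ ≤ ‖s N‖ + ‖b N‖ := norm_add_le _ _
        _ ≤ ‖s N‖ + ε := by linarith [hbε N]
    have hzlow := hzlb N
    -- lower bound for pairing of s N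
    have hP : -(1/((N:ℝ)+1)) * (‖s N‖ + ε) - ε * ‖w₀‖ ≤ ((s N) * (starRingEnd ℂ) w₀).re := by
      have h1 : -(1/((N:ℝ)+1)) * (‖s N‖ + ε) ≤ -(1/((N:ℝ)+1)) * ‖z N‖ := by
        apply mul_le_mul_of_nonpos_left hzn
        simp only [neg_nonpos]
        positivity
      nlinarith [hzlow, hbpair, hzsplit]
    -- pairing of v N
    have hvpair : ((v N) * (starRingEnd ℂ) w₀).re
        = ‖s N‖⁻¹ * ((s N) * (starRingEnd ℂ) w₀).re := by
      rw [hv]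
      simp only [Complex.real_smul]
      rw [mul_assoc, Complex.re_ofReal_mul]
    rw [hvpair, inv_mul_eq_div, le_div_iff₀ hMpos]
    have hδM : (1/((N:ℝ)+1)) * ‖s N‖ ≤ ‖s N‖ / ((n:ℝ)+1) := by
      rw [one_div, inv_mul_eq_div]
      apply div_le_div_of_nonneg_left hMpos.le ha
      linarith
    have hq : 1 ≤ ‖s N‖ / ((n:ℝ)+1) := by
      rw [le_div_iff₀ ha]
      have : (n:ℝ) + 1 ≤ (N:ℝ) + 1 := by linarith
      linarith
    have hδ1 : 1/((N:ℝ)+1) ≤ 1 := by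
      rw [div_le_one hA]; linarith
    have hδ0 : 0 ≤ 1/((N:ℝ)+1) := by positivity
    have hgoal : -(C / ((n:ℝ)+1)) * ‖s N‖
        ≤ -(1/((N:ℝ)+1)) * (‖s N‖ + ε) - ε * ‖w₀‖ := by
      have e1 : -(C / ((n:ℝ)+1)) * ‖s N‖
          = -((1 + ε + ε * ‖w₀‖) * (‖s N‖ / ((n:ℝ)+1))) := by
        rw [hC]; ring
      rw [e1]
      set q := ‖s N‖ / ((n:ℝ)+1)
      set δ := 1/((N:ℝ)+1)
      have h2 : ε * δ ≤ ε * q := by nlinarith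
      nlinarith [mul_nonneg hε.le (sub_nonneg.mpr hq),
        mul_nonneg (mul_nonneg hε.le (norm_nonneg w₀)) (sub_nonneg.mpr hq)]
    linarith
  -- take limits
  have hb0 : Filter.Tendsto (fun n : ℕ => -(C / ((n:ℝ)+1))) Filter.atTop (nhds 0) := by
    have h1 : Filter.Tendsto (fun n : ℕ => 1 / ((n:ℝ)+1)) Filter.atTop (nhds 0) :=
      tendsto_one_div_add_atTop_nhds_zero_nat
    have := h1.const_mul (-C)
    simpa [div_eq_mul_inv, mul_comm, mul_assoc, neg_mul] using this
  have hfinal : (0:ℝ) ≤ (u * (starRingEnd ℂ) w₀).re :=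
    le_of_tendsto_of_tendsto' hb0 hpair_cont hlower
  linarith
end
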